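/- There exists a constant C > 0 such that for every ρ ≥ 0, the integral ∫_ρ^∞ s / √(cosh s − cosh ρ) ds is at most C · √(ρ / sinh ρ) · √(1 + ρ), where for ρ = 0 the quantity ρ/sinh ρ is interpreted as 1. -/

import Mathlib

open MeasureTheory Set Real

namespace IntSqrtCoshAux

lemma sinh_lower {y : ℝ} (hy : 0 ≤ y) : y * Real.exp y ≤ Real.sinh (2 * y) := by
  have h1 : y ≤ Real.sinh y := Real.self_le_sinh_iff.mpr hy
  have h2 : Real.cosh y - Real.sinh y = Real.exp (-y) := Real.cosh_sub_sinh y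
  have h3 : Real.cosh y + Real.sinh y = Real.exp y := Real.cosh_add_sinh y
  have h4 : (0:ℝ) < Real.exp (-y) := Real.exp_pos _
  have h5 : (1:ℝ) ≤ Real.cosh y := Real.one_le_cosh y
  rw [Real.sinh_two_mul]
  nlinarith

lemma cosh_sub_cosh' (a b : ℝ) :
    Real.cosh a - Real.cosh b = 2 * Real.sinh ((a+b)/2) * Real.sinh ((a-b)/2) := by
  have h1 := Real.cosh_add ((a+b)/2) ((a-b)/2)
  have h2 := Real.cosh_sub ((a+b)/2) ((a-b)/2)
  have e1 : (a+b)/2 + (a-b)/2 = a := by ring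
  have e2 : (a+b)/2 - (a-b)/2 = b := by ring
  rw [e1] at h1; rw [e2] at h2; linarith

lemma int_aux {s : ℝ} (hs : -1 < s) :
    IntegrableOn (fun u : ℝ => u ^ s * Real.exp (-(u/8))) (Ioi 0) := by
  have h := integrableOn_rpow_mul_exp_neg_mul_rpow (p := 1) (b := 1/8) hs one_pos (by norm_num)
  refine h.congr_fun (fun x hx => ?_) measurableSet_Ioi
  dsimp only
  rw [Real.rpow_one, show -(1/8 : ℝ) * x = -(x/8) by ring]

noncomputable def maj (a b c : ℝ) : ℝ → ℝ :=
  fun u => (a * u ^ (-(1/2):ℝ) + b * u ^ ((1/2):ℝ) + c) * Real.exp (-(u/8))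

lemma maj_integrableOn (a b c : ℝ) : IntegrableOn (maj a b c) (Ioi 0) := by
  have h1 := (int_aux (by norm_num : (-1:ℝ) < -(1/2))).const_mul a
  have h2 := (int_aux (by norm_num : (-1:ℝ) < (1/2))).const_mul b
  have h0 := (int_aux (by norm_num : (-1:ℝ) < 0)).const_mul c
  refine IntegrableOn.congr_fun ((h1.add h2).add h0) (fun x hx => ?_) measurableSet_Ioi
  simp only [Pi.add_apply, maj, Real.rpow_zero]
  ring

lemma maj_nonneg {a b c : ℝ} (ha : 0 ≤ a) (hb : 0 ≤ b) (hc : 0 ≤ c) (u : ℝ) (hu : u ∈ Ioi (0:ℝ)) :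
    0 ≤ maj a b c u := by
  have hu' : (0:ℝ) < u := hu
  unfold maj
  positivity

lemma integral_shift (g : ℝ → ℝ) (ρ : ℝ) :
    ∫ s in Ioi ρ, g (s - ρ) = ∫ u in Ioi (0:ℝ), g u := by
  have h1 := measurePreserving_sub_right (volume : Measure ℝ) ρ
  have h2 := (MeasurableEquiv.subRight ρ).measurableEmbedding
  have h := MeasurePreserving.setIntegral_preimage_emb h1 h2 g (Ioi 0)
  have hpre : (fun x : ℝ => x - ρ) ⁻¹' (Ioi 0) = Ioi ρ := by
    ext x; simp [sub_pos]
  rw [hpre] at h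
  exact h

lemma integrable_shift {g : ℝ → ℝ} (hg : IntegrableOn g (Ioi 0)) (ρ : ℝ) :
    IntegrableOn (fun s => g (s - ρ)) (Ioi ρ) := by
  have h1 := measurePreserving_sub_right (volume : Measure ℝ) ρ
  have h2 := (MeasurableEquiv.subRight ρ).measurableEmbedding
  have hpre : (fun x : ℝ => x - ρ) ⁻¹' (Ioi 0) = Ioi ρ := by
    ext x; simp [sub_pos]
  have := (h1.integrableOn_comp_preimage h2 (f := g) (s := Ioi 0)).mpr hg
  rwa [hpre] at this

lemma sqrt_add_one {a b : ℝ} (hb : 0 ≤ b) (h : a ≤ 1 + b^2) : Real.sqrt a ≤ 1 + b := by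
  have h2 : a ≤ (1+b)^2 := by nlinarith
  calc Real.sqrt a ≤ Real.sqrt ((1+b)^2) := Real.sqrt_le_sqrt h2
    _ = 1 + b := Real.sqrt_sq (by linarith)

/-- pointwise bound, case `ρ ≤ 1` -/
lemma bound1 {ρ s : ℝ} (hρ0 : 0 ≤ ρ) (hρ1 : ρ ≤ 1) (hs : ρ < s) :
    s / Real.sqrt (Real.cosh s - Real.cosh ρ) ≤ maj 2 0 2 (s - ρ) := by
  set u := s - ρ with hu_def
  have hu : 0 < u := by simp [hu_def, hs]
  have hs0 : 0 < s := lt_of_le_of_lt hρ0 hs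
  have hD : Real.cosh s - Real.cosh ρ
      = 2 * Real.sinh ((s+ρ)/2) * Real.sinh (u/2) := by
    rw [cosh_sub_cosh' s ρ]
  have hS : s/2 ≤ Real.sinh ((s+ρ)/2) := by
    have := Real.self_le_sinh_iff.mpr (show (0:ℝ) ≤ (s+ρ)/2 by linarith)
    linarith
  have hT : (u/4) * Real.exp (u/4) ≤ Real.sinh (u/2) := by
    have := sinh_lower (show (0:ℝ) ≤ u/4 by linarith)
    rw [show 2 * (u/4) = u/2 by ring] at this
    exact this
  have hexp : (0:ℝ) < Real.exp (u/4) := Real.exp_pos _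
  have hDlb : s * u * Real.exp (u/4) / 4 ≤ Real.cosh s - Real.cosh ρ := by
    rw [hD]
    have hmul := mul_le_mul hS hT (by positivity) (le_trans (by positivity) hS)
    nlinarith
  have hDpos : 0 < Real.cosh s - Real.cosh ρ := lt_of_lt_of_le (by positivity) hDlb
  set a := Real.sqrt s with ha_def
  set b := Real.sqrt u with hb_def
  set E := Real.exp (u/8) with hE_def
  have ha0 : 0 < a := Real.sqrt_pos.mpr hs0
  have hb0 : 0 < b := Real.sqrt_pos.mpr hu
  have hE0 : 0 < E := Real.exp_pos _
  have ha2 : a^2 = s := Real.sq_sqrt hs0.le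
  have hb2 : b^2 = u := Real.sq_sqrt hu.le
  have hE2 : E^2 = Real.exp (u/4) := by
    rw [sq, ← Real.exp_add]; congr 1; ring
  have hsqrtD : a * b * E / 2 ≤ Real.sqrt (Real.cosh s - Real.cosh ρ) := by
    rw [Real.le_sqrt (by positivity) hDpos.le]
    calc (a*b*E/2)^2 = a^2 * b^2 * E^2 / 4 := by ring
      _ = s * u * Real.exp (u/4) / 4 := by rw [ha2, hb2, hE2]
      _ ≤ _ := hDlb
  have hsqrtDpos : 0 < Real.sqrt (Real.cosh s - Real.cosh ρ) := Real.sqrt_pos.mpr hDpos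
  have hrw1 : u ^ (-(1/2):ℝ) = b⁻¹ := by
    rw [Real.rpow_neg hu.le, ← Real.sqrt_eq_rpow]
  have hrw2 : u ^ ((1/2):ℝ) = b := by rw [← Real.sqrt_eq_rpow]
  have hrw3 : Real.exp (-(u/8)) = E⁻¹ := by rw [hE_def, ← Real.exp_neg]
  unfold maj
  rw [hrw1, hrw2, hrw3, div_le_iff₀ hsqrtDpos]
  have hab : a ≤ 1 + b := by
    apply sqrt_add_one hb0.le
    rw [hb2]; linarith
  have h1 : (2 * b⁻¹ + 0 * b + 2) * E⁻¹ * (a*b*E/2) = a + a*b := by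
    field_simp
    ring
  have h2 : (2 * b⁻¹ + 0 * b + 2) * E⁻¹ * (a*b*E/2)
      ≤ (2 * b⁻¹ + 0 * b + 2) * E⁻¹ * Real.sqrt (Real.cosh s - Real.cosh ρ) := by
    apply mul_le_mul_of_nonneg_left hsqrtD
    positivity
  have h3 : s ≤ a + a * b := by
    have : a * a ≤ a * (1 + b) := mul_le_mul_of_nonneg_left hab ha0.le
    nlinarith
  linarith

/-- pointwise bound, case `1 ≤ ρ` -/
lemma bound2 {ρ s : ℝ} (hρ1 : 1 ≤ ρ) (hs : ρ < s) :
    s / Real.sqrt (Real.cosh s - Real.cosh ρ)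
      ≤ (ρ / Real.sqrt (Real.sinh ρ)) * maj 2 2 0 (s - ρ) := by
  set u := s - ρ with hu_def
  have hρ0 : (0:ℝ) < ρ := lt_of_lt_of_le one_pos hρ1
  have hu : 0 < u := by simp [hu_def, hs]
  have hs0 : 0 < s := lt_trans hρ0 hs
  have hsinh : 0 < Real.sinh ρ := Real.sinh_pos_iff.mpr hρ0
  have hD : Real.cosh s - Real.cosh ρ
      = 2 * Real.sinh ((s+ρ)/2) * Real.sinh (u/2) := by
    rw [cosh_sub_cosh' s ρ]
  have hS : Real.sinh ρ ≤ Real.sinh ((s+ρ)/2) := by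
    rw [Real.sinh_le_sinh]; linarith
  have hT : (u/4) * Real.exp (u/4) ≤ Real.sinh (u/2) := by
    have := sinh_lower (show (0:ℝ) ≤ u/4 by linarith)
    rw [show 2 * (u/4) = u/2 by ring] at this
    exact this
  have hexp : (0:ℝ) < Real.exp (u/4) := Real.exp_pos _
  have hDlb : Real.sinh ρ * u * Real.exp (u/4) / 4 ≤ Real.cosh s - Real.cosh ρ := by
    rw [hD]
    have hmul := mul_le_mul hS hT (by positivity) (le_trans hsinh.le hS)
    have hST : (0:ℝ) ≤ Real.sinh ((s+ρ)/2) * Real.sinh (u/2) :=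
      le_trans (by positivity) hmul
    nlinarith
  have hDpos : 0 < Real.cosh s - Real.cosh ρ := lt_of_lt_of_le (by positivity) hDlb
  set m := Real.sqrt (Real.sinh ρ) with hm_def
  set b := Real.sqrt u with hb_def
  set E := Real.exp (u/8) with hE_def
  have hm0 : 0 < m := Real.sqrt_pos.mpr hsinh
  have hb0 : 0 < b := Real.sqrt_pos.mpr hu
  have hE0 : 0 < E := Real.exp_pos _
  have hm2 : m^2 = Real.sinh ρ := Real.sq_sqrt hsinh.le
  have hb2 : b^2 = u := Real.sq_sqrt hu.le
  have hE2 : E^2 = Real.exp (u/4) := by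
    rw [sq, ← Real.exp_add]; congr 1; ring
  have hsqrtD : m * b * E / 2 ≤ Real.sqrt (Real.cosh s - Real.cosh ρ) := by
    rw [Real.le_sqrt (by positivity) hDpos.le]
    calc (m*b*E/2)^2 = m^2 * b^2 * E^2 / 4 := by ring
      _ = Real.sinh ρ * u * Real.exp (u/4) / 4 := by rw [hm2, hb2, hE2]
      _ ≤ _ := hDlb
  have hsqrtDpos : 0 < Real.sqrt (Real.cosh s - Real.cosh ρ) := Real.sqrt_pos.mpr hDpos
  have hrw1 : u ^ (-(1/2):ℝ) = b⁻¹ := by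
    rw [Real.rpow_neg hu.le, ← Real.sqrt_eq_rpow]
  have hrw2 : u ^ ((1/2):ℝ) = b := by rw [← Real.sqrt_eq_rpow]
  have hrw3 : Real.exp (-(u/8)) = E⁻¹ := by rw [hE_def, ← Real.exp_neg]
  unfold maj
  rw [hrw1, hrw2, hrw3, div_le_iff₀ hsqrtDpos]
  have h1 : (ρ / m) * ((2 * b⁻¹ + 2 * b + 0) * E⁻¹) * (m*b*E/2) = ρ * (1 + b^2) := by
    field_simp
    ring
  have h2 : (ρ / m) * ((2 * b⁻¹ + 2 * b + 0) * E⁻¹) * (m*b*E/2)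
      ≤ (ρ / m) * ((2 * b⁻¹ + 2 * b + 0) * E⁻¹) * Real.sqrt (Real.cosh s - Real.cosh ρ) := by
    apply mul_le_mul_of_nonneg_left hsqrtD
    positivity
  have h3 : s ≤ ρ * (1 + b^2) := by
    rw [hb2]
    nlinarith
  linarith

end IntSqrtCoshAux

open IntSqrtCoshAux

theorem integral_inv_sqrt_cosh_sub_cosh_bound :
    ∃ C : ℝ, 0 < C ∧ ∀ ρ : ℝ, 0 ≤ ρ →
      ∫ s in Set.Ioi ρ, s / Real.sqrt (Real.cosh s - Real.cosh ρ) ≤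
        C * Real.sqrt (if ρ = 0 then 1 else ρ / Real.sinh ρ) * Real.sqrt (1 + ρ) := by
  set M := ∫ u in Ioi (0:ℝ), maj 2 0 2 u with hM_def
  set N := ∫ u in Ioi (0:ℝ), maj 2 2 0 u with hN_def
  have hM0 : 0 ≤ M := setIntegral_nonneg measurableSet_Ioi
    (maj_nonneg (by norm_num) (by norm_num) (by norm_num))
  have hN0 : 0 ≤ N := setIntegral_nonneg measurableSet_Ioi
    (maj_nonneg (by norm_num) (by norm_num) (by norm_num))
  refine ⟨2*M + N + 1, by positivity, fun ρ hρ0 => ?_⟩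
  set C := 2*M + N + 1 with hC_def
  have hC0 : (0:ℝ) < C := by positivity
  have hfnonneg : 0 ≤ᵐ[volume.restrict (Ioi ρ)]
      fun s => s / Real.sqrt (Real.cosh s - Real.cosh ρ) := by
    filter_upwards [self_mem_ae_restrict (measurableSet_Ioi : MeasurableSet (Ioi ρ))] with s hs
    have : 0 < s := lt_of_le_of_lt hρ0 hs
    positivity
  rcases le_or_gt ρ 1 with hρ1 | hρ1
  · -- case ρ ≤ 1
    have hstep : (∫ s in Ioi ρ, s / Real.sqrt (Real.cosh s - Real.cosh ρ)) ≤ M := by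
      have hint := integrable_shift (maj_integrableOn 2 0 2) ρ
      have h := integral_mono_of_nonneg hfnonneg hint ?_
      · rw [integral_shift (maj 2 0 2) ρ] at h
        exact h
      · filter_upwards [self_mem_ae_restrict (measurableSet_Ioi : MeasurableSet (Ioi ρ))] with s hs
        exact bound1 hρ0 hρ1 hs
    have hsqrt_half : (1:ℝ)/2 ≤ Real.sqrt (if ρ = 0 then 1 else ρ / Real.sinh ρ) := by
      have half_eq : (1/2 : ℝ) = Real.sqrt (1/4) := by
        rw [show (1/4:ℝ) = (1/2)^2 by norm_num, Real.sqrt_sq (by norm_num)]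
      rcases eq_or_lt_of_le hρ0 with h0 | h0
      · rw [← h0]
        norm_num
      · rw [if_neg h0.ne']
        have hsinh : 0 < Real.sinh ρ := Real.sinh_pos_iff.mpr h0
        have hsinh_ub : Real.sinh ρ ≤ 4 * ρ := by
          rw [Real.sinh_eq]
          have hB : Real.exp ρ * Real.exp (-(2*ρ)) = Real.exp (-ρ) := by
            rw [← Real.exp_add]; congr 1; ring
          have hA3 : Real.exp ρ ≤ 3 := by
            calc Real.exp ρ ≤ Real.exp 1 := Real.exp_le_exp.mpr hρ1
              _ ≤ 3 := by
                have := Real.exp_one_lt_d9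
                linarith
          have h2 := Real.add_one_le_exp (-(2*ρ))
          have h4 := Real.exp_pos ρ
          nlinarith
        have h14 : (1/4:ℝ) ≤ ρ / Real.sinh ρ := by
          rw [le_div_iff₀ hsinh]; linarith
        rw [half_eq]
        exact Real.sqrt_le_sqrt h14
    have hsqrt_one : (1:ℝ) ≤ Real.sqrt (1 + ρ) := by
      have := (Real.le_sqrt zero_le_one (by linarith : (0:ℝ) ≤ 1 + ρ)).mpr (by nlinarith)
      exact this
    calc (∫ s in Ioi ρ, s / Real.sqrt (Real.cosh s - Real.cosh ρ)) ≤ M := hstep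
      _ ≤ C * (1/2) * 1 := by rw [hC_def]; linarith
      _ ≤ C * Real.sqrt (if ρ = 0 then 1 else ρ / Real.sinh ρ) * Real.sqrt (1 + ρ) := by
        exact mul_le_mul (mul_le_mul_of_nonneg_left hsqrt_half hC0.le) hsqrt_one
          zero_le_one (by positivity)
  ·
    have hρ1' : (1:ℝ) ≤ ρ := hρ1.le
    have hsinh : 0 < Real.sinh ρ := Real.sinh_pos_iff.mpr (by linarith)
    set m := Real.sqrt (Real.sinh ρ) with hm_def
    have hm0 : 0 < m := Real.sqrt_pos.mpr hsinh
    have hstep : (∫ s in Ioi ρ, s / Real.sqrt (Real.cosh s - Real.cosh ρ))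
        ≤ (ρ / m) * N := by
      have hint : IntegrableOn (fun s => (ρ/m) * maj 2 2 0 (s - ρ)) (Ioi ρ) :=
        (integrable_shift (maj_integrableOn 2 2 0) ρ).const_mul _
      have h := integral_mono_of_nonneg hfnonneg hint ?_
      · rw [MeasureTheory.integral_const_mul, integral_shift (maj 2 2 0) ρ] at h
        exact h
      · filter_upwards [self_mem_ae_restrict (measurableSet_Ioi : MeasurableSet (Ioi ρ))] with s hs
        exact bound2 hρ1' hs
    have hne : ρ ≠ 0 := by linarith
    rw [if_neg hne]
    have hkey : ρ / m ≤ Real.sqrt (ρ / Real.sinh ρ) * Real.sqrt (1 + ρ) := by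
      have h1 : ρ / m = Real.sqrt (ρ^2 / Real.sinh ρ) := by
        rw [Real.sqrt_div (by positivity) _, Real.sqrt_sq hρ0]
      have h2 : Real.sqrt (ρ / Real.sinh ρ) * Real.sqrt (1 + ρ)
          = Real.sqrt (ρ / Real.sinh ρ * (1 + ρ)) := by
        rw [← Real.sqrt_mul (by positivity)]
      rw [h1, h2]
      apply Real.sqrt_le_sqrt
      rw [div_mul_eq_mul_div]
      gcongr
      nlinarith
    calc (∫ s in Ioi ρ, s / Real.sqrt (Real.cosh s - Real.cosh ρ)) ≤ (ρ/m) * N := hstep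
      _ ≤ (Real.sqrt (ρ / Real.sinh ρ) * Real.sqrt (1 + ρ)) * N := by
        apply mul_le_mul_of_nonneg_right hkey hN0
      _ ≤ (Real.sqrt (ρ / Real.sinh ρ) * Real.sqrt (1 + ρ)) * C := by
        apply mul_le_mul_of_nonneg_left (by rw [hC_def]; linarith) (by positivity)
      _ = C * Real.sqrt (ρ / Real.sinh ρ) * Real.sqrt (1 + ρ) := by ring
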